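/- Let N ≥ 1, 0 < p < 1, 0 < q < p with 1 - 2p + q > 0, and let P be the Dandelion probability function on {0,1}^{N+1} with parameters α = log((p-q)/(1-2p+q)), α₀ = (N-1)·log((1-p)/p) + N·α, β = log(q/(p-q)) - α, Z = (1+exp α)^N + exp(α₀)·(1+exp(α+β))^N. Then for any fixed non-central index i ∈ {1,…,N}, the marginal expectation E[Lᵢ] = Σ_{(l₀,…,l_N): lᵢ=1} P(l₀,…,l_N) equals p. -/

import Mathlib

/-- The real value of a Bernoulli (default) indicator. -/
noncomputable def ind (b : Bool) : ℝ := if b then 1 else 0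

/-- In the Dandelion model with parameters `α = log((p-q)/(1-2p+q))`,
`α₀ = (N-1)log((1-p)/p) + Nα`, `β = log(q/(p-q)) - α` and partition function
`Z = (1+e^α)^N + e^{α₀}(1+e^{α+β})^N`, for any fixed non-central index `i`, the marginal expectation
`E[Lᵢ] = Σ_{lᵢ=1} P(l₀,…,l_N)` equals `p`. -/
theorem dandelion_noncentral_marginal (N : ℕ) (hN : 1 ≤ N) (p q : ℝ)
    (hp0 : 0 < p) (hp1 : p < 1) (hq0 : 0 < q) (hqp : q < p)
    (hpos : 1 - 2 * p + q > 0)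
    (α α₀ β Z : ℝ)
    (hα : α = Real.log ((p - q) / (1 - 2 * p + q)))
    (hα₀ : α₀ = (N - 1 : ℝ) * Real.log ((1 - p) / p) + N * α)
    (hβ : β = Real.log (q / (p - q)) - α)
    (hZ : Z = (1 + Real.exp α) ^ N + Real.exp α₀ * (1 + Real.exp (α + β)) ^ N)
    (i : Fin N) :
    (∑ l ∈ Finset.univ.filter (fun l : Fin (N + 1) → Bool => l i.succ = true),
        (1 / Z) * Real.exp (α₀ * ind (l 0) + α * (∑ i : Fin N, ind (l i.succ))
          + β * ind (l 0) * (∑ i : Fin N, ind (l i.succ)))) = p := by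
  obtain ⟨M, rfl⟩ : ∃ M, N = M + 1 := ⟨N - 1, (Nat.succ_pred_eq_of_pos hN).symm⟩
  have hD : (0:ℝ) < 1 - 2 * p + q := hpos
  have hpq : (0:ℝ) < p - q := by linarith
  have h1p : (0:ℝ) < 1 - p := by linarith
  have hDne : (1 - 2 * p + q) ≠ 0 := ne_of_gt hD
  have hpqne : (p - q) ≠ 0 := ne_of_gt hpq
  have hpne : p ≠ 0 := ne_of_gt hp0
  set A : ℝ := (p - q) / (1 - 2 * p + q) with hAdef
  set B : ℝ := q / (p - q) with hBdef
  have hA0 : 0 < A := div_pos hpq hD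
  have hB0 : 0 < B := div_pos hq0 hpq
  have heα : Real.exp α = A := by rw [hα]; exact Real.exp_log hA0
  have heαβ : Real.exp (α + β) = B := by
    have : α + β = Real.log (q / (p - q)) := by rw [hβ]; ring
    rw [this]; exact Real.exp_log hB0
  have heα₀ : Real.exp α₀ = ((1 - p) / p) ^ M * A ^ (M + 1) := by
    have h1 : ((M + 1 : ℕ) - 1 : ℝ) = (M : ℝ) := by push_cast; ring
    rw [hα₀, h1, Real.exp_add, Real.exp_nat_mul, Real.exp_nat_mul,
      Real.exp_log (div_pos h1p hp0), heα]
  -- rewrite each term as a product over coordinates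
  have hterm : ∀ l : Fin (M + 1 + 1) → Bool,
      Real.exp (α₀ * ind (l 0) + α * (∑ j : Fin (M + 1), ind (l j.succ))
          + β * ind (l 0) * (∑ j : Fin (M + 1), ind (l j.succ)))
        = Real.exp (α₀ * ind (l 0))
          * ∏ j : Fin (M + 1), Real.exp ((α + β * ind (l 0)) * ind (l j.succ)) := by
    intro l
    rw [← Real.exp_sum, ← Real.exp_add]
    congr 1
    rw [← Finset.mul_sum]
    ring
  -- the inner sum with one coordinate fixed to true
  have inner : ∀ u : ℝ,
      (∑ g : Fin (M + 1) → Bool,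
        if g i = true then ∏ j : Fin (M + 1), Real.exp (u * ind (g j)) else 0)
        = Real.exp u * (Real.exp u + 1) ^ M := by
    intro u
    have step1 : ∀ g : Fin (M + 1) → Bool,
        (if g i = true then ∏ j : Fin (M + 1), Real.exp (u * ind (g j)) else 0)
          = ∏ j : Fin (M + 1),
              ((if j = i then ind (g j) else 1) * Real.exp (u * ind (g j))) := by
      intro g
      rw [Finset.prod_mul_distrib, Finset.prod_ite_eq' Finset.univ i
        (fun j => ind (g j)), if_pos (Finset.mem_univ i)]
      cases h : g i <;> simp [ind, h]
    rw [Finset.sum_congr rfl fun g _ => step1 g]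
    rw [← Fintype.piFinset_univ,
      ← Finset.prod_univ_sum (fun _ : Fin (M + 1) => (Finset.univ : Finset Bool))
        (fun j y => (if j = i then ind y else 1) * Real.exp (u * ind y))]
    have step2 : ∀ j : Fin (M + 1),
        (∑ y : Bool, (if j = i then ind y else 1) * Real.exp (u * ind y))
          = if j = i then Real.exp u else Real.exp u + 1 := by
      intro j
      by_cases h : j = i <;> simp [h, ind, Fintype.sum_bool, Real.exp_zero] <;> ring
    rw [Finset.prod_congr rfl fun j _ => step2 j]
    rw [← Finset.mul_prod_erase Finset.univ _ (Finset.mem_univ i), if_pos rfl]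
    congr 1
    rw [Finset.prod_congr rfl (fun j hj => by
      rw [if_neg (Finset.ne_of_mem_erase hj)]), Finset.prod_const,
      Finset.card_erase_of_mem (Finset.mem_univ i), Finset.card_univ,
      Fintype.card_fin]
    norm_num
  -- split off the central spin
  rw [Finset.sum_filter]
  rw [← Equiv.sum_comp (Fin.consEquiv (fun _ : Fin (M + 1 + 1) => Bool))
    (fun l : Fin (M + 1 + 1) → Bool =>
      if l i.succ = true then
        (1 / Z) * Real.exp (α₀ * ind (l 0) + α * (∑ j : Fin (M + 1), ind (l j.succ))
          + β * ind (l 0) * (∑ j : Fin (M + 1), ind (l j.succ))) else 0)]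
  rw [Fintype.sum_prod_type]
  have hcons : ∀ (b : Bool) (g : Fin (M + 1) → Bool),
      (if (Fin.consEquiv (fun _ : Fin (M + 1 + 1) => Bool)) (b, g) i.succ = true then
        (1 / Z) * Real.exp (α₀ * ind ((Fin.consEquiv fun _ => Bool) (b, g) 0)
          + α * (∑ j : Fin (M + 1), ind ((Fin.consEquiv fun _ => Bool) (b, g) j.succ))
          + β * ind ((Fin.consEquiv fun _ => Bool) (b, g) 0)
            * (∑ j : Fin (M + 1), ind ((Fin.consEquiv fun _ => Bool) (b, g) j.succ))) else 0)
        = (1 / Z) * Real.exp (α₀ * ind b) *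
            (if g i = true then ∏ j : Fin (M + 1),
              Real.exp ((α + β * ind b) * ind (g j)) else 0) := by
    intro b g
    by_cases h : g i = true
    · rw [if_pos (by simp [h]), hterm ((Fin.consEquiv fun _ => Bool) (b, g)), if_pos h]
      simp only [Fin.consEquiv_apply, Fin.cons_zero, Fin.cons_succ]
      ring
    · rw [if_neg (by simp [h]), if_neg h, mul_zero]
  simp only [hcons]
  rw [Fintype.sum_bool]
  simp only [← Finset.mul_sum, inner (α + β * ind true), inner (α + β * ind false)]
  simp only [ind, if_pos, if_neg, Bool.false_eq_true, ite_true, ite_false,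
    mul_one, mul_zero, add_zero, Real.exp_zero, one_mul, heα, heαβ, heα₀]
  -- now pure algebra
  have hbase : (1 - p) / p * (A * (p / (p - q))) = (1 - p) / (1 - 2 * p + q) := by
    rw [hAdef]; field_simp
  have hApow : ((1 - p) / p) ^ M * (A ^ M * (p / (p - q)) ^ M)
      = ((1 - p) / (1 - 2 * p + q)) ^ M := by
    rw [← mul_pow, ← mul_pow, hbase]
  have h1A : 1 + A = (1 - p) / (1 - 2 * p + q) := by
    rw [hAdef, one_add_div hDne]; congr 1; ring
  have h1B : 1 + B = p / (p - q) := by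
    rw [hBdef]; field_simp; ring
  have hA1 : A + 1 = (1 - p) / (1 - 2 * p + q) := by rw [add_comm]; exact h1A
  have hB1 : B + 1 = p / (p - q) := by rw [add_comm]; exact h1B
  have hAp : A * (p / (p - q)) = p / (1 - 2 * p + q) := by
    rw [hAdef]; field_simp
  have hAB : A * B = q / (1 - 2 * p + q) := by
    rw [hAdef, hBdef]; field_simp
  have hZval : Z = ((1 - p) / (1 - 2 * p + q)) ^ M / (1 - 2 * p + q) := by
    calc Z = (((1 - p) / p) ^ M * (A ^ M * (p / (p - q)) ^ M)) * (A * (p / (p - q)))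
          + ((1 - p) / (1 - 2 * p + q)) ^ M * ((1 - p) / (1 - 2 * p + q)) := by
          rw [hZ, heα, heαβ, heα₀, h1A, h1B, pow_succ, pow_succ]; ring
      _ = ((1 - p) / (1 - 2 * p + q)) ^ M * (p / (1 - 2 * p + q))
          + ((1 - p) / (1 - 2 * p + q)) ^ M * ((1 - p) / (1 - 2 * p + q)) := by
          rw [hApow, hAp]
      _ = ((1 - p) / (1 - 2 * p + q)) ^ M * ((p + (1 - p)) / (1 - 2 * p + q)) := by
          rw [← mul_add, ← add_div]
      _ = ((1 - p) / (1 - 2 * p + q)) ^ M / (1 - 2 * p + q) := by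
          rw [show p + (1 - p) = 1 from by ring, mul_one_div]
  have key : ((1 - p) / p) ^ M * A ^ (M + 1) * (B * (p / (p - q)) ^ M)
      = ((1 - p) / (1 - 2 * p + q)) ^ M * (q / (1 - 2 * p + q)) := by
    calc ((1 - p) / p) ^ M * A ^ (M + 1) * (B * (p / (p - q)) ^ M)
        = (((1 - p) / p) ^ M * (A ^ M * (p / (p - q)) ^ M)) * (A * B) := by
          rw [pow_succ]; ring
      _ = ((1 - p) / (1 - 2 * p + q)) ^ M * (q / (1 - 2 * p + q)) := by
          rw [hApow, hAB]
  rw [hA1, hB1, hZval,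
    mul_assoc (1 / (((1 - p) / (1 - 2 * p + q)) ^ M / (1 - 2 * p + q))), key, hAdef]
  have hC0 : ((1 - p) / (1 - 2 * p + q)) ^ M ≠ 0 :=
    pow_ne_zero M (ne_of_gt (div_pos h1p hD))
  generalize hc : ((1 - p) / (1 - 2 * p + q)) ^ M = C at hC0 ⊢
  field_simp
  ring
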